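/- For integers k ≥ 0 and l ≤ −2 with k + l ≤ −2, the double sum ∑_{a=0}^{k−2} ∑_{b=0}^{−l+1} (−1)^{a+l−b} C(2k,a)·C(−l+1,b)·C(k−a−l+b−1, k−2−a) equals (−1)^{k+l}·C(2k+2l−3, k+l) − δ_{k+l,1} − δ_{k+l,0}. -/

import Mathlib

open Finset


lemma lemA (m j : ℕ) (hj : j < m) :
    ∑ b ∈ range (m + 1), ((-1 : ℤ) ^ b * m.choose b * b.choose j) = 0 := by
  rw [show m + 1 = j + (m - j + 1) by omega, Finset.sum_range_add]
  have h1 : ∑ i ∈ range j, ((-1 : ℤ)^i * m.choose i * i.choose j) = 0 := by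
    apply Finset.sum_eq_zero; intro i hi; simp only [mem_range] at hi
    rw [Nat.choose_eq_zero_of_lt hi]; simp
  rw [h1, zero_add]
  have h2 : ∀ c ∈ range (m - j + 1), ((-1 : ℤ)^(j + c) * m.choose (j + c) * (j + c).choose j)
      = ((-1)^j * m.choose j) * ((-1)^c * (m - j).choose c) := by
    intro c hc; simp only [mem_range] at hc
    have hcm : (m.choose (j + c) * (j + c).choose j : ℤ)
        = (m.choose j : ℤ) * (m - j).choose c := by
      have := Nat.choose_mul (n := m) (Nat.le_add_right j c)
      rw [Nat.add_sub_cancel_left] at this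
      exact_mod_cast congrArg (Nat.cast (R := ℤ)) this
    rw [pow_add, mul_assoc, hcm]; ring
  rw [Finset.sum_congr rfl h2, ← Finset.mul_sum, Int.alternating_sum_range_choose,
    if_neg (by omega), mul_zero]

lemma lemB (r m : ℕ) (hr : r < m) :
    ∑ b ∈ range (m + 1), ((-1 : ℤ) ^ b * m.choose b * (r + m + b).choose r) = 0 := by
  have key : ∀ b ∈ range (m + 1), ((-1 : ℤ) ^ b * m.choose b * (r + m + b).choose r)
      = ∑ j ∈ range (r + 1), ((r + m).choose (r - j) : ℤ) *
          ((-1)^b * m.choose b * b.choose j) := by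
    intro b _
    have hv := Nat.add_choose_eq b (r + m) r
    rw [Finset.Nat.sum_antidiagonal_eq_sum_range_succ (fun i j => b.choose i * (r+m).choose j)] at hv
    rw [show r + m + b = b + (r + m) by ring, hv]
    push_cast
    rw [Finset.mul_sum]
    apply Finset.sum_congr rfl; intro j _; ring
  rw [Finset.sum_congr rfl key, Finset.sum_comm]
  apply Finset.sum_eq_zero; intro j hj; simp only [mem_range] at hj
  rw [← Finset.mul_sum, lemA m j (by omega), mul_zero]

/-- Generalized binomial coefficient: `0` for `k < 0`; usual binomial for `n ≥ 0`
(zero when `k > n`); for `n < 0`: `(-1)^k * C (k - n - 1) k` when `k ≥ 0`,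
`(-1)^(n-k) * C (-k - 1) (n - k)` when `k ≤ n`, and `0` otherwise. -/
def C (n k : ℤ) : ℤ :=
  if 0 ≤ n then (if 0 ≤ k then (n.toNat.choose k.toNat : ℤ) else 0)
  else if 0 ≤ k then (-1) ^ k.toNat * ((k - n - 1).toNat.choose k.toNat : ℤ)
  else if k ≤ n then (-1) ^ (n - k).toNat * ((-k - 1).toNat.choose (n - k).toNat : ℤ)
  else 0

/-- For `k ≥ 0`, `l ≤ −2` with `k + l ≤ −2`:
`∑_{a=0}^{k−2} ∑_{b=0}^{−l+1} (−1)^{a+l−b} C(2k,a) C(−l+1,b) C(k−a−l+b−1, k−2−a)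
  = (−1)^{k+l} C(2k+2l−3, k+l) − δ_{k+l,1} − δ_{k+l,0}`. -/
theorem stmt3 (k : ℕ) (l : ℤ) (hl : l ≤ -2) (hkl : (k : ℤ) + l ≤ -2) :
    ∑ a ∈ Finset.range (k - 1), ∑ b ∈ Finset.range (-l + 2).toNat,
        (-1 : ℚ) ^ ((a : ℤ) + l - b) *
          (C (2 * k) a * C (-l + 1) b * C ((k : ℤ) - a - l + b - 1) ((k : ℤ) - 2 - a) : ℤ) =
      (-1 : ℚ) ^ ((k : ℤ) + l) * (C (2 * k + 2 * l - 3) ((k : ℤ) + l) : ℤ) -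
        (if (k : ℤ) + l = 1 then 1 else 0) - (if (k : ℤ) + l = 0 then 1 else 0) := by
  have hRHS : C (2 * k + 2 * l - 3) ((k : ℤ) + l) = 0 := by
    unfold C
    rw [if_neg (by omega), if_neg (by omega), if_neg (by omega)]
  rw [hRHS, if_neg (by omega), if_neg (by omega)]
  simp only [Int.cast_zero, mul_zero, sub_zero, zero_sub, neg_zero, sub_zero]
  apply Finset.sum_eq_zero
  intro a ha
  simp only [mem_range] at ha
  have hk2 : 2 ≤ k := by omega
  set m : ℕ := (-l + 1).toNat with hmdef
  have hm : (-l + 1 : ℤ) = (m : ℤ) := by rw [hmdef, Int.toNat_of_nonneg (by omega)]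
  have hm2 : (-l + 2).toNat = m + 1 := by omega
  set r : ℕ := k - 2 - a with hrdef
  have hrm : r < m := by omega
  have hC1 : C (2 * (k : ℤ)) a = ((2 * k).choose a : ℤ) := by
    unfold C
    rw [if_pos (by positivity), if_pos (by positivity)]
    have h : (2 * (k : ℤ)).toNat = 2 * k := by omega
    rw [h, Int.toNat_natCast]
  have hC2 : ∀ b : ℕ, C (-l + 1) b = (m.choose b : ℤ) := by
    intro b
    unfold C
    rw [if_pos (by omega), if_pos (by positivity), hm]
    norm_num
  have hC3 : ∀ b : ℕ, C ((k : ℤ) - a - l + b - 1) ((k : ℤ) - 2 - a)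
      = (((r + m + b).choose r : ℕ) : ℤ) := by
    intro b
    have h1 : (k : ℤ) - a - l + b - 1 = ((r + m + b : ℕ) : ℤ) := by push_cast; omega
    have h2 : (k : ℤ) - 2 - a = (r : ℤ) := by omega
    rw [h1, h2]
    unfold C
    rw [if_pos (Int.natCast_nonneg _), if_pos (Int.natCast_nonneg _),
      Int.toNat_natCast, Int.toNat_natCast]
  rw [hm2]
  have key : ∀ b ∈ range (m + 1),
      (-1 : ℚ) ^ ((a : ℤ) + l - b) *
        (C (2 * k) a * C (-l + 1) b * C ((k : ℤ) - a - l + b - 1) ((k : ℤ) - 2 - a) : ℤ)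
      = ((-1 : ℚ) ^ ((a : ℤ) + l) * ((2 * k).choose a : ℚ)) *
          ((((-1 : ℤ) ^ b * m.choose b * (r + m + b).choose r : ℤ) : ℚ)) := by
    intro b _
    rw [hC1, hC2, hC3]
    have hsg : (-1 : ℚ) ^ ((a : ℤ) + l - b) = (-1 : ℚ) ^ ((a : ℤ) + l) * (-1 : ℚ) ^ b := by
      rw [zpow_sub₀ (by norm_num : (-1 : ℚ) ≠ 0), zpow_natCast, div_eq_mul_inv,
        ← inv_pow, inv_neg, inv_one]
    rw [hsg]
    push_cast
    ring
  rw [Finset.sum_congr rfl key, ← Finset.mul_sum, ← Int.cast_sum, lemB r m hrm]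
  simp
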